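/- Fix r* > 0 and α ≥ 1, and for ε ∈ (0,1) set r := r*·ε^α. Define (c_n) by c₀ = r+ε, c_{n+1} = r+ε − r²/(r+ε+c_n); let ρ₀ := 1, ρ_m := r/(c₀+c_{m−1}) for m ≥ 1, q_n := ∏_{m=0}^n ρ_m, and Q := Σ_{n=0}^∞ q_n. Then for every ε ∈ (0,1), 1 + r*ε^{α−1}/(2 + r*ε^{α−1}) ≤ Q ≤ 1 + (1/2)·r*·ε^{α−1} ≤ 1 + r*/2. In particular there exist constants C₁, C₂ > 0 depending only on r* such that C₁ ≤ Q ≤ C₂ for all ε ∈ (0,1) and all α ≥ 1. -/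

import Mathlib

open Real

theorem stmt_11 (rs : ℝ) (hrs : 0 < rs) :
    ∃ C₁ > (0:ℝ), ∃ C₂ > (0:ℝ), ∀ α : ℝ, 1 ≤ α → ∀ ε ∈ Set.Ioo (0:ℝ) 1,
      ∀ c ρ q : ℕ → ℝ,
        c 0 = rs * ε ^ α + ε →
        (∀ n, c (n + 1) = rs * ε ^ α + ε - (rs * ε ^ α) ^ 2 / (rs * ε ^ α + ε + c n)) →
        ρ 0 = 1 →
        (∀ m, 1 ≤ m → ρ m = rs * ε ^ α / (c 0 + c (m - 1))) →
        (∀ n, q n = ∏ m ∈ Finset.range (n + 1), ρ m) →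
        (1 + rs * ε ^ (α - 1) / (2 + rs * ε ^ (α - 1)) ≤ ∑' n, q n ∧
          (∑' n, q n) ≤ 1 + (1/2) * (rs * ε ^ (α - 1)) ∧
          1 + (1/2) * (rs * ε ^ (α - 1)) ≤ 1 + rs / 2) ∧
        C₁ ≤ ∑' n, q n ∧ (∑' n, q n) ≤ C₂ := by
  refine ⟨1, one_pos, 1 + rs / 2, by positivity, ?_⟩
  intro α hα ε hε c ρ q hc0 hcrec hρ0 hρm hq
  obtain ⟨hε0, hε1⟩ := hε
  set r : ℝ := rs * ε ^ α with hr
  have hεα : (0:ℝ) < ε ^ α := Real.rpow_pos_of_pos hε0 α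
  have hr0 : 0 < r := by positivity
  set s : ℝ := r + ε with hs
  have hs0 : 0 < s := by positivity
  have hrls : r < s := by simp [hs]; linarith
  set t : ℝ := Real.sqrt (ε ^ 2 + 2 * r * ε) with ht
  have ht2 : t ^ 2 = ε ^ 2 + 2 * r * ε := Real.sq_sqrt (by positivity)
  have ht0 : 0 ≤ t := Real.sqrt_nonneg _
  have htε : ε ≤ t := by
    have : ε = Real.sqrt (ε ^ 2) := by rw [Real.sqrt_sq hε0.le]
    rw [this, ht]
    exact Real.sqrt_le_sqrt (by nlinarith)
  have htpos : 0 < t := lt_of_lt_of_le hε0 htε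
  have hts : t ≤ s := by nlinarith
  -- key identity : r^2 / (s + t) = s - t
  have hkey : r ^ 2 / (s + t) = s - t := by
    rw [div_eq_iff (by positivity)]
    have : s ^ 2 = r ^ 2 + 2 * r * ε + ε ^ 2 := by rw [hs]; ring
    nlinarith
  -- bounds on c
  have hc : ∀ n, t ≤ c n ∧ c n ≤ s := by
    intro n
    induction n with
    | zero => rw [hc0]; exact ⟨hts, le_refl _⟩
    | succ n ih =>
      obtain ⟨h1, h2⟩ := ih
      have hsc : 0 < s + c n := by linarith
      have hrec : c (n + 1) = s - r ^ 2 / (s + c n) := hcrec n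
      constructor
      · rw [hrec]
        have : r ^ 2 / (s + c n) ≤ r ^ 2 / (s + t) :=
          div_le_div_of_nonneg_left (by positivity) (by positivity) (by linarith)
        rw [hkey] at this; linarith
      · rw [hrec]
        have : 0 ≤ r ^ 2 / (s + c n) := by positivity
        linarith
  set a : ℝ := r / (s + t) with ha
  set b : ℝ := r / (2 * s) with hb
  have ha0 : 0 ≤ a := by positivity
  have hb0 : 0 ≤ b := by positivity
  have ha1 : a < 1 := by
    rw [ha, div_lt_one (by positivity)]; linarith
  have hb1 : b < 1 := by
    rw [hb, div_lt_one (by positivity)]; linarith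
  -- bounds on ρ for m ≥ 1
  have hρb : ∀ n : ℕ, b ≤ ρ (n + 1) ∧ ρ (n + 1) ≤ a := by
    intro n
    have h := hρm (n + 1) (by omega)
    simp only [Nat.add_sub_cancel] at h
    obtain ⟨h1, h2⟩ := hc n
    have hρeq : ρ (n + 1) = r / (s + c n) := by rw [h, hc0]
    rw [hρeq]
    constructor
    · rw [hb]
      exact div_le_div_of_nonneg_left hr0.le (by linarith) (by linarith)
    · rw [ha]
      exact div_le_div_of_nonneg_left hr0.le (by positivity) (by linarith)
  -- q recursion and bounds
  have hq0 : q 0 = 1 := by rw [hq 0]; simp [hρ0]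
  have hqs : ∀ n, q (n + 1) = q n * ρ (n + 1) := by
    intro n; rw [hq (n + 1), hq n, Finset.prod_range_succ]
  have hqb : ∀ n, b ^ n ≤ q n ∧ q n ≤ a ^ n := by
    intro n
    induction n with
    | zero => simp [hq0]
    | succ n ih =>
      obtain ⟨h1, h2⟩ := ih
      obtain ⟨h3, h4⟩ := hρb n
      have hqn0 : 0 ≤ q n := le_trans (by positivity) h1
      rw [hqs n, pow_succ, pow_succ]
      constructor
      · exact mul_le_mul h1 h3 hb0 hqn0
      · exact mul_le_mul h2 h4 (le_trans hb0 h3) (pow_nonneg ha0 n)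
  have hsa : Summable (fun n : ℕ => a ^ n) := summable_geometric_of_lt_one ha0 ha1
  have hsb : Summable (fun n : ℕ => b ^ n) := summable_geometric_of_lt_one hb0 hb1
  have hsq : Summable q :=
    Summable.of_nonneg_of_le (fun n => le_trans (pow_nonneg hb0 n) (hqb n).1)
      (fun n => (hqb n).2) hsa
  have hQle : (∑' n, q n) ≤ (1 - a)⁻¹ := by
    rw [← tsum_geometric_of_lt_one ha0 ha1]
    exact Summable.tsum_le_tsum (fun n => (hqb n).2) hsq hsa
  have hQge : (1 - b)⁻¹ ≤ ∑' n, q n := by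
    rw [← tsum_geometric_of_lt_one hb0 hb1]
    exact Summable.tsum_le_tsum (fun n => (hqb n).1) hsb hsq
  -- rewrite rs * ε ^ (α - 1) as r / ε
  have hE : rs * ε ^ (α - 1) = r / ε := by
    rw [hr, Real.rpow_sub hε0, Real.rpow_one]; ring
  have hb1' : (1:ℝ) - b ≠ 0 := by linarith
  have ha1' : (1:ℝ) - a ≠ 0 := by linarith
  -- lower bound
  have hne1 : (2:ℝ) * ε + r ≠ 0 := by positivity
  have hne2 : r + ε + t ≠ 0 := by positivity
  have hne3 : ε + t ≠ 0 := by positivity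
  have e1 : r / ε / (2 + r / ε) = r / (2 * ε + r) := by
    rw [div_div]
    congr 1
    field_simp
  have hne4 : (2:ℝ) * (r + ε) ≠ 0 := by positivity
  have e2 : (1 - b)⁻¹ = 1 + r / (2 * ε + r) := by
    have hb' : 1 - b = (2 * ε + r) / (2 * (r + ε)) := by
      rw [hb, hs]
      field_simp [hne4]
      ring
    rw [hb', inv_div, div_eq_iff hne1, add_mul, one_mul, div_mul_cancel₀ _ hne1]
    ring
  have hlow : 1 + rs * ε ^ (α - 1) / (2 + rs * ε ^ (α - 1)) ≤ ∑' n, q n := by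
    refine le_trans (le_of_eq ?_) hQge
    rw [hE, e1, e2]
  -- upper bound
  have hinva : (1 - a)⁻¹ = 1 + r / (ε + t) := by
    have ha' : 1 - a = (ε + t) / (r + ε + t) := by
      rw [ha, hs]
      field_simp [hne2]
      ring
    rw [ha', inv_div, div_eq_iff hne3, add_mul, one_mul, div_mul_cancel₀ _ hne3]
    ring
  have hup : (∑' n, q n) ≤ 1 + 1 / 2 * (rs * ε ^ (α - 1)) := by
    refine le_trans hQle ?_
    rw [hinva, hE]
    have : r / (ε + t) ≤ r / (2 * ε) :=
      div_le_div_of_nonneg_left hr0.le (by positivity) (by linarith)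
    have h2 : r / (2 * ε) = 1 / 2 * (r / ε) := by ring
    linarith
  -- third inequality
  have hone : ε ^ (α - 1) ≤ 1 := Real.rpow_le_one hε0.le hε1.le (by linarith)
  have hEpos : 0 ≤ rs * ε ^ (α - 1) := by positivity
  have h3rd : 1 + 1 / 2 * (rs * ε ^ (α - 1)) ≤ 1 + rs / 2 := by nlinarith
  have hQ1 : (1:ℝ) ≤ ∑' n, q n := by
    have : 0 ≤ rs * ε ^ (α - 1) / (2 + rs * ε ^ (α - 1)) := by positivity
    linarith
  exact ⟨⟨hlow, hup, h3rd⟩, hQ1, le_trans hup h3rd⟩
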